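/- Let N be a tree-child network on X, and let e = (u,v) be a reticulation edge of N. Then the network obtained from N by deleting e and suppressing u and v is a tree-child network on X. -/

import Mathlib

/-!
Common definitions: rooted binary phylogenetic networks as directed acyclic
multigraphs (parallel edges allowed), tree-child networks, leaf-labelled
acyclic digraphs, phylogenetic digraphs, embeddings, extensions, root
extensions, cut sizes, SNPR operations, SNPR sequences, and the associated
distances `dtc`, `mtc`, `drspr`.
-/

open Relation

/-- A directed multigraph on vertex type `V`: a finite vertex set together with
a multiset of directed edges (so parallel edges are allowed). -/
structure MDigraph (V : Type) where
  verts : Finset V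
  edges : Multiset (V × V)

namespace MDigraph

variable {V : Type} [DecidableEq V]

/-- In-degree of a vertex (counting multiplicities). -/
def inDeg (G : MDigraph V) (v : V) : ℕ :=
  (G.edges.filter fun e => e.2 = v).card

/-- Out-degree of a vertex (counting multiplicities). -/
def outDeg (G : MDigraph V) (v : V) : ℕ :=
  (G.edges.filter fun e => e.1 = v).card

/-- `u` is a parent of `v`. -/
def Adj (G : MDigraph V) (u v : V) : Prop := (u, v) ∈ G.edges

/-- Directed reachability. -/
def Reach (G : MDigraph V) : V → V → Prop := Relation.ReflTransGen G.Adj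

/-- The digraph has no directed cycle. -/
def Acyclic (G : MDigraph V) : Prop := ∀ u v, G.Adj u v → ¬ G.Reach v u

/-- Underlying undirected adjacency. -/
def UAdj (G : MDigraph V) (u v : V) : Prop := G.Adj u v ∨ G.Adj v u

/-- The underlying undirected graph is connected. -/
def Connected (G : MDigraph V) : Prop :=
  ∀ u ∈ G.verts, ∀ v ∈ G.verts, Relation.ReflTransGen G.UAdj u v

/-- Edge endpoints lie in the vertex set. -/
def WellFormed (G : MDigraph V) : Prop :=
  ∀ e ∈ G.edges, e.1 ∈ G.verts ∧ e.2 ∈ G.verts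

/-- A leaf: a vertex of out-degree zero. -/
def IsLeafV (G : MDigraph V) (v : V) : Prop := v ∈ G.verts ∧ G.outDeg v = 0

/-- A tree vertex: in-degree one and out-degree one or two. -/
def IsTreeVert (G : MDigraph V) (v : V) : Prop :=
  v ∈ G.verts ∧ G.inDeg v = 1 ∧ (G.outDeg v = 1 ∨ G.outDeg v = 2)

/-- A reticulation: in-degree two and out-degree one. -/
def IsRetic (G : MDigraph V) (v : V) : Prop :=
  v ∈ G.verts ∧ G.inDeg v = 2 ∧ G.outDeg v = 1

/-- A reticulation edge: an edge whose head is a reticulation. -/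
def IsReticEdge (G : MDigraph V) (e : V × V) : Prop :=
  e ∈ G.edges ∧ G.IsRetic e.2

/-- A tree edge: an edge whose head is not a reticulation. -/
def IsTreeEdge (G : MDigraph V) (e : V × V) : Prop :=
  e ∈ G.edges ∧ ¬ G.IsRetic e.2

end MDigraph

variable {V : Type} [DecidableEq V]

/-- `G` is a rooted binary phylogenetic network on `X` with root `ρ`. -/
structure IsPhyloNetwork (G : MDigraph V) (X : Finset V) (ρ : V) : Prop where
  wf : G.WellFormed
  conn : G.Connected
  acyc : G.Acyclic
  X_nonempty : X.Nonempty
  X_sub : X ⊆ G.verts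
  root_mem : ρ ∈ G.verts
  root_inDeg : G.inDeg ρ = 0
  root_outDeg : G.outDeg ρ = 1
  root_unique : ∀ v ∈ G.verts, G.inDeg v = 0 → v = ρ
  leaf_iff : ∀ v ∈ G.verts, (G.outDeg v = 0 ↔ v ∈ X)
  leaf_inDeg : ∀ v ∈ G.verts, G.outDeg v = 0 → G.inDeg v = 1
  internal : ∀ v ∈ G.verts, v ≠ ρ → G.outDeg v ≠ 0 →
    (G.inDeg v = 1 ∧ G.outDeg v = 2) ∨ (G.inDeg v = 2 ∧ G.outDeg v = 1)

/-- Every non-leaf vertex has a child that is a tree vertex or a leaf. -/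
def IsTreeChildG (G : MDigraph V) : Prop :=
  ∀ v ∈ G.verts, G.outDeg v ≠ 0 → ∃ w, G.Adj v w ∧ (G.IsTreeVert w ∨ G.IsLeafV w)

/-- A tree-child network on `X` with root `ρ`. -/
def IsTCNetwork (G : MDigraph V) (X : Finset V) (ρ : V) : Prop :=
  IsPhyloNetwork G X ρ ∧ IsTreeChildG G

/-- Two reticulations joined by an edge. -/
def HasStack (G : MDigraph V) : Prop :=
  ∃ u v, G.IsRetic u ∧ G.IsRetic v ∧ G.Adj u v

/-- Two (distinct) reticulations with a common parent. -/
def HasSiblingRetics (G : MDigraph V) : Prop :=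
  ∃ p u v, u ≠ v ∧ G.IsRetic u ∧ G.IsRetic v ∧ G.Adj p u ∧ G.Adj p v

/-- A pair of parallel edges. -/
def HasParallel (G : MDigraph V) : Prop :=
  ∃ e : V × V, 1 < G.edges.count e

/-- Delete (one copy of) an edge. -/
def deleteEdge (G : MDigraph V) (e : V × V) : MDigraph V :=
  ⟨G.verts, G.edges.erase e⟩

/-- Add the edge `(u, v)` together with the new vertex `u`. -/
def addEdgeFrom (G : MDigraph V) (u v : V) : MDigraph V :=
  ⟨insert u G.verts, (u, v) ::ₘ G.edges⟩

/-- `G'` is obtained from `G` by suppressing the vertex `w` of in-degree one and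
out-degree one, replacing its two incident edges by a single edge from its
parent to its child. -/
def SuppressAt (G G' : MDigraph V) (w : V) : Prop :=
  ∃ p c, G.Adj p w ∧ G.Adj w c ∧ G.inDeg w = 1 ∧ G.outDeg w = 1 ∧
    G'.verts = G.verts.erase w ∧
    G'.edges = (p, c) ::ₘ ((G.edges.erase (p, w)).erase (w, c))

/-- One suppression step. -/
def SuppressStep (G G' : MDigraph V) : Prop := ∃ w, SuppressAt G G' w

/-- `G'` is obtained from `G` by subdividing the edge `e` with the new vertex `w`. -/
def SubdivAt (G G' : MDigraph V) (e : V × V) (w : V) : Prop :=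
  e ∈ G.edges ∧ w ∉ G.verts ∧ G'.verts = insert w G.verts ∧
    G'.edges = (e.1, w) ::ₘ (w, e.2) ::ₘ G.edges.erase e

/-- `G` and `H` are isomorphic via an isomorphism fixing every element of `S`. -/
def IsoFixing (G H : MDigraph V) (S : Finset V) : Prop :=
  ∃ φ : V ≃ V, (∀ x ∈ S, φ x = x) ∧ G.verts.image φ = H.verts ∧
    G.edges.map (fun e => (φ e.1, φ e.2)) = H.edges

/-- `D` is a leaf-labelled acyclic digraph on `Y` (relative to the root label `ρ`). -/
def IsLLAD (D : MDigraph V) (Y : Finset V) (ρ : V) : Prop :=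
  D.WellFormed ∧ D.Connected ∧ D.Acyclic ∧
    ((Y = ∅ ∧ D.verts = {ρ} ∧ D.edges = 0) ∨
     (∃ y, Y = {y} ∧ D.verts = {y} ∧ D.edges = 0) ∨
     (Y.Nonempty ∧ Y ⊆ D.verts ∧
       (∀ v ∈ D.verts, D.inDeg v = 0 → D.outDeg v = 1 → v = ρ) ∧
       (∀ y ∈ Y, D.inDeg y = 1 ∧ D.outDeg y = 0) ∧
       (∀ v ∈ D.verts, D.outDeg v = 0 → v ∈ Y) ∧
       (∀ v ∈ D.verts, v ∉ Y → ¬(D.inDeg v = 0 ∧ D.outDeg v = 1) →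
         (D.inDeg v = 0 ∧ D.outDeg v = 2) ∨ (D.inDeg v = 1 ∧ D.outDeg v = 2) ∨
           (D.inDeg v = 2 ∧ D.outDeg v = 1))))

/-- `M` is a subgraph of `N` (edges counted with multiplicity). -/
def IsSubgraph (M N : MDigraph V) : Prop :=
  M.verts ⊆ N.verts ∧ M.edges ≤ N.edges

/-- `M` is an embedding of `D` in `N`: a subgraph of `N` that is isomorphic to
`D` up to suppressing vertices of in-degree one and out-degree one, where the
isomorphism fixes the leaf labels and the root. -/
def IsEmbeddingOfComp (N D M : MDigraph V) (X : Finset V) (ρ : V) : Prop :=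
  IsSubgraph M N ∧ ∃ M₀, Relation.ReflTransGen SuppressStep M M₀ ∧
    IsoFixing M₀ D (insert ρ X)

/-- A collection `D_ρ = comp 0, D_1, …, D_k` of digraphs together with their
leaf sets. -/
structure PhyloDigraph (V : Type) where
  k : ℕ
  comp : Fin (k + 1) → MDigraph V
  leaves : Fin (k + 1) → Finset V

/-- `M` is an embedding of the collection `𝒟` in `N`: pairwise vertex-disjoint
embeddings of the components. -/
def IsFamEmbedding (N : MDigraph V) (X : Finset V) (ρ : V) (𝒟 : PhyloDigraph V)
    (M : Fin (𝒟.k + 1) → MDigraph V) : Prop :=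
  (∀ i, IsEmbeddingOfComp N (𝒟.comp i) (M i) X ρ) ∧
    ∀ i j, i ≠ j → Disjoint (M i).verts (M j).verts

/-- `𝒟` is a phylogenetic digraph of the network `N` on `X` with root `ρ`. -/
def IsPhyloDigraphOf (𝒟 : PhyloDigraph V) (N : MDigraph V) (X : Finset V) (ρ : V) : Prop :=
  (∀ i, IsLLAD (𝒟.comp i) (𝒟.leaves i) ρ) ∧
  (∀ i j, i ≠ j → Disjoint (𝒟.leaves i) (𝒟.leaves j)) ∧
  Finset.univ.biUnion 𝒟.leaves = X ∧
  ρ ∈ (𝒟.comp 0).verts ∧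
  (∀ i, i ≠ 0 → ρ ∉ (𝒟.comp i).verts) ∧
  (((𝒟.comp 0).verts = {ρ} ∧ (𝒟.comp 0).edges = 0) ∨
    ((𝒟.comp 0).inDeg ρ = 0 ∧ (𝒟.comp 0).outDeg ρ = 1)) ∧
  ∃ M, IsFamEmbedding N X ρ 𝒟 M

/-- `𝒟` is tree-child: each non-leaf vertex of `𝒟` has a child that is a leaf
or a tree vertex. -/
def IsTreeChildDigraph (𝒟 : PhyloDigraph V) : Prop :=
  ∀ i, IsTreeChildG (𝒟.comp i)

/-- Operation (E1): for a vertex `v` of `R` of in-degree zero in `R`, add an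
edge `(u, v)` of `N` provided `u` is not in `R`. -/
def E1Step (N : MDigraph V) {k : ℕ} (R R' : Fin (k + 1) → MDigraph V) : Prop :=
  ∃ i u v, (u, v) ∈ N.edges ∧ v ∈ (R i).verts ∧ (R i).inDeg v = 0 ∧
    (∀ j, u ∉ (R j).verts) ∧ R' = Function.update R i (addEdgeFrom (R i) u v)

/-- Operation (E2): for a vertex `v` of `R` that is a reticulation of `N` and
has in-degree one and out-degree one in `R`, add an edge `(u, v)` of `N`
provided `u` is not in `R`. -/
def E2Step (N : MDigraph V) {k : ℕ} (R R' : Fin (k + 1) → MDigraph V) : Prop :=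
  ∃ i u v, (u, v) ∈ N.edges ∧ v ∈ (R i).verts ∧ N.IsRetic v ∧
    (R i).inDeg v = 1 ∧ (R i).outDeg v = 1 ∧
    (∀ j, u ∉ (R j).verts) ∧ R' = Function.update R i (addEdgeFrom (R i) u v)

def ExtStep (N : MDigraph V) {k : ℕ} (R R' : Fin (k + 1) → MDigraph V) : Prop :=
  E1Step N R R' ∨ E2Step N R R'

/-- `R` is an extension obtained from `M` by applying (E1) and (E2) until no
further such operation is possible. -/
def IsExtensionFrom (N : MDigraph V) {k : ℕ} (M R : Fin (k + 1) → MDigraph V) : Prop :=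
  Relation.ReflTransGen (ExtStep N) M R ∧ ∀ R', ¬ ExtStep N R R'

/-- `R` is a root extension obtained from `M` by applying (E1) only, until (E1)
is no longer possible. -/
def IsRootExtensionFrom (N : MDigraph V) {k : ℕ} (M R : Fin (k + 1) → MDigraph V) : Prop :=
  Relation.ReflTransGen (E1Step N) M R ∧ ∀ R', ¬ E1Step N R R'

/-- `R` is an extension of `𝒟` in `N`. -/
def IsExtensionOf (N : MDigraph V) (X : Finset V) (ρ : V) (𝒟 : PhyloDigraph V)
    (R : Fin (𝒟.k + 1) → MDigraph V) : Prop :=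
  ∃ M, IsFamEmbedding N X ρ 𝒟 M ∧ IsExtensionFrom N M R

/-- `R` is a root extension of `𝒟` in `N`. -/
def IsRootExtensionOf (N : MDigraph V) (X : Finset V) (ρ : V) (𝒟 : PhyloDigraph V)
    (R : Fin (𝒟.k + 1) → MDigraph V) : Prop :=
  ∃ M, IsFamEmbedding N X ρ 𝒟 M ∧ IsRootExtensionFrom N M R

/-- All edges of a family of digraphs. -/
def famEdges {k : ℕ} (R : Fin (k + 1) → MDigraph V) : Multiset (V × V) :=
  ∑ i, (R i).edges

/-- All vertices of a family of digraphs. -/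
def famVerts {k : ℕ} (R : Fin (k + 1) → MDigraph V) : Finset V :=
  Finset.univ.biUnion fun i => (R i).verts

/-- `|E_N − E_R|`: the number of edges of `N` not contained in `R`. -/
def cutSize (N : MDigraph V) {k : ℕ} (R : Fin (k + 1) → MDigraph V) : ℕ :=
  (N.edges - famEdges R).card

/-- SNPR⁻: delete a reticulation edge `(u, v)` (with `u` a tree vertex) and
suppress `u` and `v`. -/
def SNPRminus (N N' : MDigraph V) : Prop :=
  ∃ u v N₂, N.IsTreeVert u ∧ N.IsRetic v ∧ (u, v) ∈ N.edges ∧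
    SuppressAt (deleteEdge N (u, v)) N₂ u ∧ SuppressAt N₂ N' v

/-- SNPR⁺: subdivide an edge `e` with `v'`, subdivide an edge `f` that is not a
descendant of `v'` with `u'`, and add the edge `(u', v')`. -/
def SNPRplus (N N' : MDigraph V) : Prop :=
  ∃ e f v' u' N₁ N₂, SubdivAt N N₁ e v' ∧ f ∈ N₁.edges ∧ ¬ N₁.Reach v' f.1 ∧
    SubdivAt N₁ N₂ f u' ∧ N'.verts = N₂.verts ∧ N'.edges = (u', v') ::ₘ N₂.edges

/-- SNPR±: delete a tree edge `(u, v)` with `u` a tree vertex, suppress `u`,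
subdivide an edge `f` that is not a descendant of `v` with a new vertex `u'`,
and add the edge `(u', v)`.  (Following the global assumption of the paper, the
deleted edge is a tree edge.) -/
def SNPRpm (N N' : MDigraph V) : Prop :=
  ∃ u v f u' N₂ N₃, N.IsTreeVert u ∧ (u, v) ∈ N.edges ∧ ¬ N.IsRetic v ∧
    SuppressAt (deleteEdge N (u, v)) N₂ u ∧
    f ∈ N₂.edges ∧ ¬ N₂.Reach v f.1 ∧ SubdivAt N₂ N₃ f u' ∧
    N'.verts = N₃.verts ∧ N'.edges = (u', v) ::ₘ N₃.edges

/-- SNPR⁺ up to isomorphism fixing `X ∪ {ρ}`. -/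
def SNPRplusI (X : Finset V) (ρ : V) (N N' : MDigraph V) : Prop :=
  ∃ N₀, SNPRplus N N₀ ∧ IsoFixing N₀ N' (insert ρ X)

/-- SNPR⁻ up to isomorphism fixing `X ∪ {ρ}`. -/
def SNPRminusI (X : Finset V) (ρ : V) (N N' : MDigraph V) : Prop :=
  ∃ N₀, SNPRminus N N₀ ∧ IsoFixing N₀ N' (insert ρ X)

/-- SNPR± up to isomorphism fixing `X ∪ {ρ}`. -/
def SNPRpmI (X : Finset V) (ρ : V) (N N' : MDigraph V) : Prop :=
  ∃ N₀, SNPRpm N N₀ ∧ IsoFixing N₀ N' (insert ρ X)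

/-- A single SNPR operation (up to isomorphism). -/
def SNPRI (X : Finset V) (ρ : V) (N N' : MDigraph V) : Prop :=
  SNPRplusI X ρ N N' ∨ SNPRminusI X ρ N N' ∨ SNPRpmI X ρ N N'

/-- A tree-child SNPR sequence of length `t`. -/
def IsTCSeq (X : Finset V) (ρ : V) (t : ℕ) (seq : ℕ → MDigraph V) : Prop :=
  (∀ i ≤ t, IsTCNetwork (seq i) X ρ) ∧ ∀ i < t, SNPRI X ρ (seq i) (seq (i + 1))

/-- Weight of one SNPR step: an SNPR± weighs two, an SNPR⁺ or SNPR⁻ weighs one. -/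
noncomputable def stepWeight (X : Finset V) (ρ : V) (G G' : MDigraph V) : ℕ :=
  haveI := Classical.propDecidable (SNPRpmI X ρ G G')
  if SNPRpmI X ρ G G' then 2 else 1

/-- Weight of an SNPR sequence. -/
noncomputable def seqWeight (X : Finset V) (ρ : V) (t : ℕ) (seq : ℕ → MDigraph V) : ℕ :=
  ∑ i ∈ Finset.range t, stepWeight X ρ (seq i) (seq (i + 1))

/-- The tree-child SNPR distance: the minimum weight of a tree-child SNPR
sequence connecting `N` and `N'`. -/
noncomputable def dtc (X : Finset V) (ρ : V) (N N' : MDigraph V) : ℕ :=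
  sInf { w | ∃ t seq, IsTCSeq X ρ t seq ∧ seq 0 = N ∧ seq t = N' ∧
    w = seqWeight X ρ t seq }

/-- `m_tc(N, N')`: the minimum of `c_𝒟 + c'_𝒟` over all agreement tree-child
digraphs `𝒟` for `N` and `N'`. -/
noncomputable def mtc (X : Finset V) (ρ : V) (N N' : MDigraph V) : ℕ :=
  sInf { m | ∃ (𝒟 : PhyloDigraph V) (R : Fin (𝒟.k + 1) → MDigraph V)
      (R' : Fin (𝒟.k + 1) → MDigraph V),
    IsPhyloDigraphOf 𝒟 N X ρ ∧ IsPhyloDigraphOf 𝒟 N' X ρ ∧ IsTreeChildDigraph 𝒟 ∧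
    IsExtensionOf N X ρ 𝒟 R ∧ IsExtensionOf N' X ρ 𝒟 R' ∧
    m = cutSize N R + cutSize N' R' }

/-- No reticulations: `G` is a tree. -/
def NoRetic (G : MDigraph V) : Prop := ∀ v, ¬ G.IsRetic v

/-- The rSPR distance between two phylogenetic `X`-trees: the minimum number of
rSPR operations (SNPR± operations applied to trees) transforming `T` into `T'`. -/
noncomputable def drspr (X : Finset V) (ρ : V) (T T' : MDigraph V) : ℕ :=
  sInf { t | ∃ seq : ℕ → MDigraph V,
    (∀ i ≤ t, IsPhyloNetwork (seq i) X ρ ∧ NoRetic (seq i)) ∧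
    (∀ i < t, SNPRpmI X ρ (seq i) (seq (i + 1))) ∧ seq 0 = T ∧ seq t = T' }


section TCHelpers

variable {V : Type} [DecidableEq V]

omit [DecidableEq V] in
lemma no_transGen_self {G : MDigraph V} (h : G.Acyclic) (a : V) :
    ¬ Relation.TransGen G.Adj a a := by
  intro hh
  cases hh with
  | single h1 => exact h a a h1 Relation.ReflTransGen.refl
  | tail h1 h2 => exact h _ _ h2 h1.to_reflTransGen

lemma degIn (G : MDigraph V) (w : V) :
    G.inDeg w = G.edges.countP (fun e => e.2 = w) := by
  rw [MDigraph.inDeg, ← Multiset.countP_eq_card_filter]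

lemma degOut (G : MDigraph V) (w : V) :
    G.outDeg w = G.edges.countP (fun e => e.1 = w) := by
  rw [MDigraph.outDeg, ← Multiset.countP_eq_card_filter]

lemma connected_of_root (G : MDigraph V) (rr : V) (hwf : G.WellFormed)
    (hac : G.Acyclic) (hrr : rr ∈ G.verts)
    (hun : ∀ v ∈ G.verts, G.inDeg v = 0 → v = rr) : G.Connected := by
  have hsym : Symmetric G.UAdj := fun x y h => h.symm
  have key : ∀ s : {x // x ∈ G.verts}, Relation.ReflTransGen G.UAdj s.1 rr := by
    haveI : Fintype {x // x ∈ G.verts} := FinsetCoe.fintype _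
    set r : {x // x ∈ G.verts} → {x // x ∈ G.verts} → Prop :=
      fun a b => G.Adj a.1 b.1 with hr
    haveI : IsIrrefl _ (Relation.TransGen r) := by
      constructor
      intro a ha
      exact no_transGen_self hac a.1
        (Relation.TransGen.lift Subtype.val (fun a b h => h) a a ha)
    have hwfr : WellFounded r :=
      Subrelation.wf (fun h => Relation.TransGen.single h)
        (Finite.wellFounded_of_trans_of_irrefl (Relation.TransGen r))
    intro s
    induction s using WellFounded.induction hwfr with
    | _ s ih =>
      by_cases h0 : G.inDeg s.1 = 0
      · rw [hun s.1 s.2 h0]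
      · rw [degIn] at h0
        have hne : G.edges.filter (fun e => e.2 = s.1) ≠ 0 := by
          intro hz
          rw [Multiset.countP_eq_card_filter, hz] at h0
          simp at h0
        obtain ⟨e, he⟩ := Multiset.exists_mem_of_ne_zero hne
        rw [Multiset.mem_filter] at he
        have hadj : G.Adj e.1 s.1 := by
          show (e.1, s.1) ∈ G.edges
          rw [← he.2]
          simpa using he.1
        exact Relation.ReflTransGen.head (Or.inr hadj)
          (ih ⟨e.1, (hwf e he.1).1⟩ hadj)
  intro a ha b hb
  exact (key ⟨a, ha⟩).trans ((@Relation.ReflTransGen.stdSymm _ _ ⟨hsym⟩).symm _ _ (key ⟨b, hb⟩))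

end TCHelpers

/-- Deleting a reticulation edge `(u, v)` of a tree-child
network on `X` and suppressing `u` and `v` yields a tree-child network on `X`. -/
theorem treeChild_of_deleteReticEdge
    (N N₂ N' : MDigraph V) (X : Finset V) (ρ : V) (u v : V)
    (hN : IsTCNetwork N X ρ) (he : N.IsReticEdge (u, v))
    (h₂ : SuppressAt (deleteEdge N (u, v)) N₂ u) (h₃ : SuppressAt N₂ N' v) :
    IsTCNetwork N' X ρ := by
  obtain ⟨hPN, hTC⟩ := hN
  obtain ⟨huv, hvV, hvIn, hvOut⟩ := he
  obtain ⟨p, c, hpu0, huc0, hInU0, hOutU0, hV2, hE2⟩ := h₂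
  obtain ⟨q, d, hqv0, hvd0, hInV0, hOutV0, hV'0, hE'0⟩ := h₃
  have hvIn : N.inDeg v = 2 := hvIn
  have hvOut : N.outDeg v = 1 := hvOut
  have hvV : v ∈ N.verts := hvV
  have hacyc := hPN.acyc
  have hwfN := hPN.wf
  -- adjacency facts in N
  have hpu1 : (p, u) ∈ N.edges.erase (u, v) := hpu0
  have huc1 : (u, c) ∈ N.edges.erase (u, v) := huc0
  have hAdj_pu : N.Adj p u := Multiset.mem_of_mem_erase hpu1
  have hAdj_uc : N.Adj u c := Multiset.mem_of_mem_erase huc1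
  have hAdj_uv : N.Adj u v := huv
  have hne_self : ∀ x y, N.Adj x y → x ≠ y := by
    intro x y h hxy
    subst hxy
    exact hacyc x x h Relation.ReflTransGen.refl
  have huv_ne : u ≠ v := hne_self _ _ hAdj_uv
  have hpu_ne : p ≠ u := hne_self _ _ hAdj_pu
  have huc_ne : u ≠ c := hne_self _ _ hAdj_uc
  have hpv : p ≠ v := by
    intro h
    subst h
    exact hacyc u p hAdj_uv (Relation.ReflTransGen.single hAdj_pu)
  -- degrees of u in N
  have hconsuv : (u, v) ::ₘ N.edges.erase (u, v) = N.edges := Multiset.cons_erase huv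
  have hInNu : N.inDeg u = 1 := by
    rw [degIn, ← hconsuv, Multiset.countP_cons, if_neg (by simpa using huv_ne.symm)]
    have h1 : (deleteEdge N (u, v)).inDeg u = 1 := hInU0
    rw [degIn] at h1
    exact h1
  have hOutNu : N.outDeg u = 2 := by
    rw [degOut, ← hconsuv, Multiset.countP_cons, if_pos (by simp)]
    have h1 : (deleteEdge N (u, v)).outDeg u = 1 := hOutU0
    rw [degOut] at h1
    rw [show ((N.edges.erase (u,v)).countP (fun e => e.1 = u)) = 1 from h1]
  have huV : u ∈ N.verts := (hwfN _ huv).1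
  have hvNTL : ¬ (N.IsTreeVert v ∨ N.IsLeafV v) := by
    rintro (⟨_, h1, _⟩ | ⟨_, h2⟩)
    · rw [hvIn] at h1; exact absurd h1 (by norm_num)
    · rw [hvOut] at h2; exact absurd h2 (by norm_num)
  -- c ≠ v via tree-child
  have hcv : c ≠ v := by
    intro h
    subst h
    have hcnt : 2 ≤ N.edges.count (u, c) := by
      have h1 : 1 ≤ N.edges.count (u, c) := Multiset.one_le_count_iff_mem.mpr huv
      have h2 : 1 ≤ (N.edges.erase (u, c)).count (u, c) :=
        Multiset.one_le_count_iff_mem.mpr huc1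
      rw [Multiset.count_erase_self] at h2
      omega
    obtain ⟨z, hz, hz2⟩ := hTC u huV (by rw [hOutNu]; omega)
    have hzv : z = c := by
      by_contra hzc
      have hz1 : (u, z) ∈ N.edges.filter (fun e => e.1 = u) :=
        Multiset.mem_filter.mpr ⟨hz, rfl⟩
      have hcard : (N.edges.filter (fun e => e.1 = u)).card = 2 := hOutNu
      have hcnt2 : 2 ≤ (N.edges.filter (fun e => e.1 = u)).count (u, c) := by
        rw [Multiset.count_filter, if_pos rfl]
        exact hcnt
      have hrest := Multiset.cons_erase hz1
      have : 2 ≤ ((N.edges.filter (fun e => e.1 = u)).erase (u, z)).count (u, c) := by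
        have := Multiset.count_cons_of_ne
          (show ((u : V), (c : V)) ≠ (u, z) by simp [Ne.symm hzc])
          ((N.edges.filter (fun e => e.1 = u)).erase (u, z))
        rw [← this, hrest]
        exact hcnt2
      have hle := Multiset.count_le_card ((u : V), (c : V))
        ((N.edges.filter (fun e => e.1 = u)).erase (u, z))
      have hcarde : ((N.edges.filter (fun e => e.1 = u)).erase (u, z)).card = 1 := by
        rw [Multiset.card_erase_of_mem hz1, hcard]
        rfl
      omega
    subst hzv
    exact hvNTL hz2
  -- memberships for the edge decomposition
  have huc2 : (u, c) ∈ (N.edges.erase (u, v)).erase (p, u) :=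
    (Multiset.mem_erase_of_ne (by simp [Ne.symm hpu_ne])).mpr huc1
  have hE2' : N₂.edges = (p, c) ::ₘ (((N.edges.erase (u, v)).erase (p, u)).erase (u, c)) := hE2
  have hqv1 : (q, v) ∈ ((N.edges.erase (u, v)).erase (p, u)).erase (u, c) := by
    have h1 : (q, v) ∈ N₂.edges := hqv0
    rw [hE2'] at h1
    rcases Multiset.mem_cons.mp h1 with h | h
    · exact absurd ((by simpa [Prod.ext_iff] using h : q = p ∧ v = c).2) (Ne.symm hcv)
    · exact h
  have hAdj_qv : N.Adj q v :=
    Multiset.mem_of_mem_erase (Multiset.mem_of_mem_erase (Multiset.mem_of_mem_erase hqv1))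
  have hqv_ne : q ≠ v := hne_self _ _ hAdj_qv
  have hvd1 : (v, d) ∈ ((N.edges.erase (u, v)).erase (p, u)).erase (u, c) := by
    have h1 : (v, d) ∈ N₂.edges := hvd0
    rw [hE2'] at h1
    rcases Multiset.mem_cons.mp h1 with h | h
    · exact absurd ((by simpa [Prod.ext_iff] using h : v = p ∧ d = c).1) (Ne.symm hpv)
    · exact h
  have hAdj_vd : N.Adj v d :=
    Multiset.mem_of_mem_erase (Multiset.mem_of_mem_erase (Multiset.mem_of_mem_erase hvd1))
  have hvd_ne : v ≠ d := hne_self _ _ hAdj_vd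
  have hdu : d ≠ u := by
    intro h
    exact hacyc u v hAdj_uv
      (Relation.ReflTransGen.single (show N.Adj v u from h ▸ hAdj_vd))
  have hvd2 : (v, d) ∈ (((N.edges.erase (u, v)).erase (p, u)).erase (u, c)).erase (q, v) :=
    (Multiset.mem_erase_of_ne (by simp [Ne.symm hvd_ne])).mpr hvd1
  set E5 : Multiset (V × V) :=
    ((((N.edges.erase (u, v)).erase (p, u)).erase (u, c)).erase (q, v)).erase (v, d)
    with hE5def
  have hEdec : N.edges = (u, v) ::ₘ (p, u) ::ₘ (u, c) ::ₘ (q, v) ::ₘ (v, d) ::ₘ E5 := by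
    rw [hE5def, Multiset.cons_erase hvd2, Multiset.cons_erase hqv1, Multiset.cons_erase huc2,
      Multiset.cons_erase hpu1, Multiset.cons_erase huv]
  have hE'dec : N'.edges = (q, d) ::ₘ (p, c) ::ₘ E5 := by
    rw [hE'0, hE2', Multiset.erase_cons_tail _ (show ((p : V), (c : V)) ≠ (q, v) by simp [hcv]),
      Multiset.erase_cons_tail _ (show ((p : V), (c : V)) ≠ (v, d) by simp [hpv]), hE5def]
  -- q ≠ u
  have hqu : q ≠ u := by
    intro h
    subst h
    have h2 := hOutNu
    rw [degOut, hEdec] at h2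
    simp [Multiset.countP_cons, hpu_ne, Ne.symm huv_ne] at h2
  -- the leftover edges avoid u and v
  have hOutU5 : E5.countP (fun e => e.1 = u) = 0 := by
    have h2 := hOutNu
    rw [degOut, hEdec] at h2
    simp [Multiset.countP_cons, hpu_ne, hqu, Ne.symm huv_ne] at h2
    omega
  have hInU5 : E5.countP (fun e => e.2 = u) = 0 := by
    have h2 := hInNu
    rw [degIn, hEdec] at h2
    simp [Multiset.countP_cons, Ne.symm huv_ne, Ne.symm huc_ne, hdu] at h2
    omega
  have hInV5 : E5.countP (fun e => e.2 = v) = 0 := by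
    have h2 := hvIn
    rw [degIn, hEdec] at h2
    simp [Multiset.countP_cons, huv_ne, hcv, Ne.symm hvd_ne] at h2
    omega
  have hOutV5 : E5.countP (fun e => e.1 = v) = 0 := by
    have h2 := hvOut
    rw [degOut, hEdec] at h2
    simp [Multiset.countP_cons, huv_ne, hpv, hqv_ne] at h2
    omega
  have hE5mem : ∀ e ∈ E5, e.1 ≠ u ∧ e.2 ≠ u ∧ e.1 ≠ v ∧ e.2 ≠ v := by
    intro e he5
    exact ⟨Multiset.countP_eq_zero.mp hOutU5 e he5, Multiset.countP_eq_zero.mp hInU5 e he5,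
      Multiset.countP_eq_zero.mp hOutV5 e he5, Multiset.countP_eq_zero.mp hInV5 e he5⟩
  have hE5sub : ∀ e ∈ E5, e ∈ N.edges := by
    intro e he5
    rw [hEdec]
    exact Multiset.mem_cons_of_mem (Multiset.mem_cons_of_mem (Multiset.mem_cons_of_mem
      (Multiset.mem_cons_of_mem (Multiset.mem_cons_of_mem he5))))
  -- vertex set of N'
  have hV'' : N'.verts = (N.verts.erase u).erase v := by
    rw [hV'0, hV2]
    rfl
  have hmemV' : ∀ w, w ∈ N'.verts ↔ w ∈ N.verts ∧ w ≠ u ∧ w ≠ v := by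
    intro w
    rw [hV'']
    simp [Finset.mem_erase]
    tauto
  -- degree transfer
  have hInEq : ∀ w, w ≠ u → w ≠ v → N'.inDeg w = N.inDeg w := by
    intro w hwu hwv
    rw [degIn, degIn, hEdec, hE'dec]
    simp [Multiset.countP_cons, Ne.symm hwv, Ne.symm hwu]
    split_ifs <;> omega
  have hOutEq : ∀ w, w ≠ u → w ≠ v → N'.outDeg w = N.outDeg w := by
    intro w hwu hwv
    rw [degOut, degOut, hEdec, hE'dec]
    simp [Multiset.countP_cons, Ne.symm hwv, Ne.symm hwu]
    split_ifs <;> omega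
  -- acyclicity of N'
  have hAdjN'toN : ∀ a b, N'.Adj a b → Relation.TransGen N.Adj a b := by
    intro a b h
    have hmem : (a, b) ∈ N'.edges := h
    rw [hE'dec] at hmem
    rcases Multiset.mem_cons.mp hmem with h1 | h1
    · obtain ⟨ha, hb⟩ : a = q ∧ b = d := by simpa [Prod.ext_iff] using h1
      subst ha; subst hb
      exact Relation.TransGen.head hAdj_qv (Relation.TransGen.single hAdj_vd)
    rcases Multiset.mem_cons.mp h1 with h2 | h2
    · obtain ⟨ha, hb⟩ : a = p ∧ b = c := by simpa [Prod.ext_iff] using h2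
      subst ha; subst hb
      exact Relation.TransGen.head hAdj_pu (Relation.TransGen.single hAdj_uc)
    · exact Relation.TransGen.single (hE5sub _ h2)
  have hReachN' : ∀ a b, N'.Reach a b → N.Reach a b := by
    intro a b h
    induction h with
    | refl => exact Relation.ReflTransGen.refl
    | tail h1 h2 ih => exact ih.trans (hAdjN'toN _ _ h2).to_reflTransGen
  have hacyc' : N'.Acyclic := by
    intro a b hab hba
    exact no_transGen_self hacyc a
      (Relation.TransGen.trans_left (hAdjN'toN a b hab) (hReachN' _ _ hba))
  -- root is neither u nor v
  have hρu : ρ ≠ u := by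
    intro h
    have h0 := hPN.root_inDeg
    rw [h, hInNu] at h0
    exact absurd h0 one_ne_zero
  have hρv : ρ ≠ v := by
    intro h
    have h0 := hPN.root_inDeg
    rw [h, hvIn] at h0
    exact absurd h0 (by norm_num)
  -- new vertex memberships
  have hqV' : q ∈ N'.verts := (hmemV' q).mpr ⟨(hwfN _ hAdj_qv).1, hqu, hqv_ne⟩
  have hdV' : d ∈ N'.verts := (hmemV' d).mpr ⟨(hwfN _ hAdj_vd).2, hdu, Ne.symm hvd_ne⟩
  have hpV' : p ∈ N'.verts := (hmemV' p).mpr ⟨(hwfN _ hAdj_pu).1, hpu_ne, hpv⟩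
  have hcV' : c ∈ N'.verts := (hmemV' c).mpr ⟨(hwfN _ hAdj_uc).2, Ne.symm huc_ne, hcv⟩
  have hwf' : N'.WellFormed := by
    intro e he'
    rw [hE'dec] at he'
    rcases Multiset.mem_cons.mp he' with h | h
    · rw [h]; exact ⟨hqV', hdV'⟩
    rcases Multiset.mem_cons.mp h with h | h
    · rw [h]; exact ⟨hpV', hcV'⟩
    · have h4 := hE5mem e h
      have h5 := hwfN e (hE5sub e h)
      exact ⟨(hmemV' _).mpr ⟨h5.1, h4.1, h4.2.2.1⟩, (hmemV' _).mpr ⟨h5.2, h4.2.1, h4.2.2.2⟩⟩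
  have hXsub' : X ⊆ N'.verts := by
    intro x hx
    have hxN := hPN.X_sub hx
    have hxu : x ≠ u := by
      intro h
      subst h
      have h0 := (hPN.leaf_iff x huV).mpr hx
      rw [hOutNu] at h0
      exact absurd h0 (by norm_num)
    have hxv : x ≠ v := by
      intro h
      subst h
      have h0 := (hPN.leaf_iff x hvV).mpr hx
      rw [hvOut] at h0
      exact absurd h0 one_ne_zero
    exact (hmemV' x).mpr ⟨hxN, hxu, hxv⟩
  have hrootmem' : ρ ∈ N'.verts := (hmemV' ρ).mpr ⟨hPN.root_mem, hρu, hρv⟩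
  have hrootuniq' : ∀ w ∈ N'.verts, N'.inDeg w = 0 → w = ρ := by
    intro w hw h0
    obtain ⟨hwN, hwu, hwv⟩ := (hmemV' w).mp hw
    rw [hInEq w hwu hwv] at h0
    exact hPN.root_unique w hwN h0
  -- the tree-child property
  have hTLtrans : ∀ z, z ≠ u → z ≠ v →
      (N.IsTreeVert z ∨ N.IsLeafV z) → (N'.IsTreeVert z ∨ N'.IsLeafV z) := by
    intro z hzu hzv h
    rcases h with ⟨h1, h2, h3⟩ | ⟨h1, h2⟩
    · exact Or.inl ⟨(hmemV' z).mpr ⟨h1, hzu, hzv⟩,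
        by rw [hInEq z hzu hzv]; exact h2, by rw [hOutEq z hzu hzv]; exact h3⟩
    · exact Or.inr ⟨(hmemV' z).mpr ⟨h1, hzu, hzv⟩, by rw [hOutEq z hzu hzv]; exact h2⟩
  have hcTL : N.IsTreeVert c ∨ N.IsLeafV c := by
    obtain ⟨z, hz, hz2⟩ := hTC u huV (by rw [hOutNu]; omega)
    have hzc : z = c := by
      have hzmem : (u, z) ∈ N.edges := hz
      rw [hEdec] at hzmem
      rcases Multiset.mem_cons.mp hzmem with h | h
      · obtain ⟨h1, h2⟩ : u = u ∧ z = v := by simpa [Prod.ext_iff] using h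
        subst h2
        exact absurd hz2 hvNTL
      rcases Multiset.mem_cons.mp h with h | h
      · exact absurd ((by simpa [Prod.ext_iff] using h : u = p ∧ z = u).1.symm) hpu_ne
      rcases Multiset.mem_cons.mp h with h | h
      · exact (by simpa [Prod.ext_iff] using h : u = u ∧ z = c).2
      rcases Multiset.mem_cons.mp h with h | h
      · exact absurd ((by simpa [Prod.ext_iff] using h : u = q ∧ z = v).1.symm) hqu
      rcases Multiset.mem_cons.mp h with h | h
      · exact absurd ((by simpa [Prod.ext_iff] using h : u = v ∧ z = d).1) huv_ne
      · exact absurd rfl (hE5mem _ h).1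
    subst hzc
    exact hz2
  have hTC' : IsTreeChildG N' := by
    intro w hw hwout
    obtain ⟨hwN, hwu, hwv⟩ := (hmemV' w).mp hw
    have hwoutN : N.outDeg w ≠ 0 := by
      rw [← hOutEq w hwu hwv]
      exact hwout
    obtain ⟨z, hz, hz2⟩ := hTC w hwN hwoutN
    have hzmem : (w, z) ∈ N.edges := hz
    rw [hEdec] at hzmem
    rcases Multiset.mem_cons.mp hzmem with h | h
    · exact absurd ((by simpa [Prod.ext_iff] using h : w = u ∧ z = v).1) hwu
    rcases Multiset.mem_cons.mp h with h | h
    · obtain ⟨h1, h2⟩ : w = p ∧ z = u := by simpa [Prod.ext_iff] using h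
      refine ⟨c, ?_, hTLtrans c (Ne.symm huc_ne) hcv hcTL⟩
      show (w, c) ∈ N'.edges
      rw [hE'dec, h1]
      exact Multiset.mem_cons_of_mem (Multiset.mem_cons_self _ _)
    rcases Multiset.mem_cons.mp h with h | h
    · exact absurd ((by simpa [Prod.ext_iff] using h : w = u ∧ z = c).1) hwu
    rcases Multiset.mem_cons.mp h with h | h
    · obtain ⟨h1, h2⟩ : w = q ∧ z = v := by simpa [Prod.ext_iff] using h
      subst h2
      exact absurd hz2 hvNTL
    rcases Multiset.mem_cons.mp h with h | h
    · exact absurd ((by simpa [Prod.ext_iff] using h : w = v ∧ z = d).1) hwv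
    · have h4 := hE5mem _ h
      refine ⟨z, ?_, hTLtrans z h4.2.1 h4.2.2.2 hz2⟩
      show (w, z) ∈ N'.edges
      rw [hE'dec]
      exact Multiset.mem_cons_of_mem (Multiset.mem_cons_of_mem h)
  refine ⟨⟨hwf', connected_of_root N' ρ hwf' hacyc' hrootmem' hrootuniq', hacyc',
    hPN.X_nonempty, hXsub', hrootmem', ?_, ?_, hrootuniq', ?_, ?_, ?_⟩, hTC'⟩
  · rw [hInEq ρ hρu hρv]
    exact hPN.root_inDeg
  · rw [hOutEq ρ hρu hρv]
    exact hPN.root_outDeg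
  · intro w hw
    obtain ⟨hwN, hwu, hwv⟩ := (hmemV' w).mp hw
    rw [hOutEq w hwu hwv]
    exact hPN.leaf_iff w hwN
  · intro w hw h0
    obtain ⟨hwN, hwu, hwv⟩ := (hmemV' w).mp hw
    rw [hOutEq w hwu hwv] at h0
    rw [hInEq w hwu hwv]
    exact hPN.leaf_inDeg w hwN h0
  · intro w hw hwρ h0
    obtain ⟨hwN, hwu, hwv⟩ := (hmemV' w).mp hw
    rw [hOutEq w hwu hwv] at h0
    rw [hInEq w hwu hwv, hOutEq w hwu hwv]
    exact hPN.internal w hwN hwρ h0
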